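/- Let r be a positive integer and H a complex Hilbert space. Let (z_k) be a sequence in L(ℂ^r, H) converging in norm to ξ ∈ L(ℂ^r, H), and let (e_k) be a sequence of minimal tripotents in L(ℂ^r, H) (i.e., e_k = a_k⊗b_k with unit vectors a_k ∈ ℂ^r, b_k ∈ H) converging in the weak operator topology to e ∈ L(ℂ^r, H). Then the sequence ({e_k, z_k, e_k}) = (e_k z_k* e_k) converges in the weak operator topology to {e, ξ, e} = e ξ* e. -/

import Mathlib

open ContinuousLinearMap Filter

/-- The rank-one operator `a ⊗ b : ℂ^r → H`, `μ ↦ ⟨μ, a⟩ b` (inner product linear in the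
first variable, i.e. `⟪a, μ⟫` in Mathlib's convention). -/
noncomputable def rankOne {r : ℕ} {H : Type*} [NormedAddCommGroup H] [InnerProductSpace ℂ H]
    (a : EuclideanSpace ℂ (Fin r)) (b : H) : EuclideanSpace ℂ (Fin r) →L[ℂ] H :=
  (innerSL ℂ a).smulRight b

section Aux
variable {r : ℕ} {H : Type*} [NormedAddCommGroup H] [InnerProductSpace ℂ H] [CompleteSpace H]

omit [CompleteSpace H] in
lemma rankOne_apply (a : EuclideanSpace ℂ (Fin r)) (b : H) (μ : EuclideanSpace ℂ (Fin r)) :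
    rankOne a b μ = (inner ℂ a μ : ℂ) • b := rfl

lemma adj_coord (z : EuclideanSpace ℂ (Fin r) →L[ℂ] H) (b : H) (i : Fin r) :
    (adjoint z b) i = (inner ℂ (z (EuclideanSpace.single i 1)) b : ℂ) := by
  have h1 : (inner ℂ (EuclideanSpace.single i (1:ℂ)) (adjoint z b) : ℂ) = (adjoint z b) i := by
    simp [EuclideanSpace.inner_single_left]
  rw [← h1, adjoint_inner_right]

lemma key (a : EuclideanSpace ℂ (Fin r)) (b : H) (z : EuclideanSpace ℂ (Fin r) →L[ℂ] H)
    (μ : EuclideanSpace ℂ (Fin r)) (h : H) :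
    (inner ℂ ((rankOne a b ∘L adjoint z ∘L rankOne a b) μ) h : ℂ)
      = (∑ i : Fin r, (inner ℂ (rankOne a b (EuclideanSpace.single i 1))
            (z (EuclideanSpace.single i 1)) : ℂ)) * inner ℂ (rankOne a b μ) h := by
  have h2 : (starRingEnd ℂ) (inner ℂ a (adjoint z b) : ℂ)
      = ∑ i, a i * (inner ℂ b (z (EuclideanSpace.single i 1)) : ℂ) := by
    have hza : (inner ℂ a (adjoint z b) : ℂ) = ∑ i, (starRingEnd ℂ) (a i) * (adjoint z b) i := by
      simp [PiLp.inner_apply, RCLike.inner_apply]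
      exact Finset.sum_congr rfl fun i _ => mul_comm _ _
    rw [hza, map_sum]
    refine Finset.sum_congr rfl fun i _ => ?_
    rw [adj_coord]
    simp [inner_conj_symm]
  simp only [ContinuousLinearMap.comp_apply, rankOne_apply, map_smul, inner_smul_left,
    inner_smul_right, EuclideanSpace.inner_single_right, map_mul, map_one, RingHom.id_apply,
    starRingEnd_self_apply, one_mul]
  rw [h2]
  ring

omit [CompleteSpace H] in
lemma rankOne_det (a : EuclideanSpace ℂ (Fin r)) (b : H)
    (μ μ' : EuclideanSpace ℂ (Fin r)) (h h' : H) :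
    (inner ℂ (rankOne a b μ) h : ℂ) * inner ℂ (rankOne a b μ') h'
      = (inner ℂ (rankOne a b μ') h : ℂ) * inner ℂ (rankOne a b μ) h' := by
  simp only [rankOne_apply, inner_smul_left]
  ring

/-- A map satisfying the 2×2 determinant condition is rank one. -/
lemma exists_rankOne (e' : EuclideanSpace ℂ (Fin r) →L[ℂ] H)
    (hdet : ∀ (μ μ' : EuclideanSpace ℂ (Fin r)) (h h' : H),
      (inner ℂ (e' μ) h : ℂ) * inner ℂ (e' μ') h'
        = (inner ℂ (e' μ') h : ℂ) * inner ℂ (e' μ) h') :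
    ∃ (a : EuclideanSpace ℂ (Fin r)) (b : H), e' = rankOne a b := by
  by_cases he : e' = 0
  · refine ⟨0, 0, ?_⟩
    ext μ
    simp [he, rankOne_apply]
  · obtain ⟨μ₀, hμ₀⟩ : ∃ μ₀, e' μ₀ ≠ 0 := by
      by_contra hc
      push_neg at hc
      exact he (by ext μ; simp [hc μ])
    have hcne : ((‖e' μ₀‖ : ℂ)^2) ≠ 0 := by
      have : (0:ℝ) < ‖e' μ₀‖^2 := pow_pos (norm_pos_iff.mpr hμ₀) 2
      norm_cast
      exact ne_of_gt this
    refine ⟨((‖e' μ₀‖ : ℂ)^2)⁻¹ • adjoint e' (e' μ₀), e' μ₀, ?_⟩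
    ext μ
    apply ext_inner_right ℂ
    intro h
    have hbb : (inner ℂ (e' μ₀) (e' μ₀) : ℂ) = (‖e' μ₀‖ : ℂ)^2 := by
      rw [inner_self_eq_norm_sq_to_K]
      norm_num
    have h1 := hdet μ μ₀ h (e' μ₀)
    rw [hbb] at h1
    rw [rankOne_apply, inner_smul_left, inner_smul_left, adjoint_inner_left]
    simp only [map_inv₀, map_pow, Complex.conj_ofReal, inner_conj_symm]
    field_simp
    rw [map_div₀, inner_conj_symm, map_pow, Complex.conj_ofReal]
    have hn : (‖e' μ₀‖ : ℂ) ≠ 0 := fun h0 => hcne (by rw [h0]; ring)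
    field_simp
    linear_combination h1

end Aux

/-- Lemma 4.3 (for the Cartan factor `L(ℂ^r, H)`): if `(z_k)` converges in norm to `ξ` and
`(e_k)` is a sequence of minimal tripotents converging in the weak operator topology to `e`,
then `{e_k, z_k, e_k} = e_k z_k* e_k` converges to `{e, ξ, e} = e ξ* e` in the weak
operator topology. -/
theorem stmt2 {r : ℕ} (hr : 0 < r) {H : Type*} [NormedAddCommGroup H] [InnerProductSpace ℂ H]
    [CompleteSpace H] (z : ℕ → EuclideanSpace ℂ (Fin r) →L[ℂ] H)
    (ξ : EuclideanSpace ℂ (Fin r) →L[ℂ] H)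
    (hz : Tendsto z atTop (nhds ξ))
    (e : ℕ → EuclideanSpace ℂ (Fin r) →L[ℂ] H) (e' : EuclideanSpace ℂ (Fin r) →L[ℂ] H)
    (hmin : ∀ k, ∃ (a : EuclideanSpace ℂ (Fin r)) (b : H),
      ‖a‖ = 1 ∧ ‖b‖ = 1 ∧ e k = rankOne a b)
    (he : ∀ (μ : EuclideanSpace ℂ (Fin r)) (h : H),
      Tendsto (fun k => (inner ℂ (e k μ) h : ℂ)) atTop (nhds (inner ℂ (e' μ) h))) :
    ∀ (μ : EuclideanSpace ℂ (Fin r)) (h : H),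
      Tendsto (fun k => (inner ℂ ((e k ∘L adjoint (z k) ∘L e k) μ) h : ℂ)) atTop
        (nhds (inner ℂ ((e' ∘L adjoint ξ ∘L e') μ) h)) := by
  intro μ h
  have hbound : ∀ k (x : EuclideanSpace ℂ (Fin r)), ‖e k x‖ ≤ ‖x‖ := by
    intro k x
    obtain ⟨a, b, ha, hb, hk⟩ := hmin k
    rw [hk, rankOne_apply, norm_smul]
    calc ‖(inner ℂ a x : ℂ)‖ * ‖b‖ ≤ (‖a‖ * ‖x‖) * ‖b‖ := by
          gcongr
          exact norm_inner_le_norm a x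
    _ = ‖x‖ := by rw [ha, hb]; ring
  have hzx : ∀ x, Tendsto (fun k => z k x) atTop (nhds (ξ x)) := fun x =>
    ((ContinuousLinearMap.apply ℂ H x).continuous.tendsto ξ).comp hz
  have hterm : ∀ i : Fin r,
      Tendsto (fun k => (inner ℂ (e k (EuclideanSpace.single i 1))
          (z k (EuclideanSpace.single i 1)) : ℂ)) atTop
        (nhds (inner ℂ (e' (EuclideanSpace.single i 1)) (ξ (EuclideanSpace.single i 1)))) := by
    intro i
    set x : EuclideanSpace ℂ (Fin r) := EuclideanSpace.single i 1 with hx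
    have h0 : Tendsto (fun k => (inner ℂ (e k x) (z k x - ξ x) : ℂ)) atTop (nhds 0) := by
      rw [tendsto_zero_iff_norm_tendsto_zero]
      have hnorm : Tendsto (fun k => ‖x‖ * ‖z k x - ξ x‖) atTop (nhds 0) := by
        have h3 : Tendsto (fun k => ‖z k x - ξ x‖) atTop (nhds 0) := by
          have := ((hzx x).sub (tendsto_const_nhds (x := ξ x))).norm
          simpa using this
        simpa using h3.const_mul ‖x‖
      refine squeeze_zero (fun k => norm_nonneg _) (fun k => ?_) hnorm
      calc ‖(inner ℂ (e k x) (z k x - ξ x) : ℂ)‖ ≤ ‖e k x‖ * ‖z k x - ξ x‖ :=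
            norm_inner_le_norm _ _
      _ ≤ ‖x‖ * ‖z k x - ξ x‖ := by gcongr; exact hbound k x
    have := h0.add (he x (ξ x))
    simp only [zero_add] at this
    refine this.congr fun k => ?_
    rw [inner_sub_right]
    ring
  have hmain : Tendsto (fun k => (∑ i : Fin r, (inner ℂ (e k (EuclideanSpace.single i 1))
        (z k (EuclideanSpace.single i 1)) : ℂ)) * inner ℂ (e k μ) h) atTop
      (nhds ((∑ i : Fin r, (inner ℂ (e' (EuclideanSpace.single i 1))
        (ξ (EuclideanSpace.single i 1)) : ℂ)) * inner ℂ (e' μ) h)) :=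
    (tendsto_finset_sum _ fun i _ => hterm i).mul (he μ h)
  have hdet : ∀ (μ1 μ2 : EuclideanSpace ℂ (Fin r)) (h1 h2 : H),
      (inner ℂ (e' μ1) h1 : ℂ) * inner ℂ (e' μ2) h2
        = (inner ℂ (e' μ2) h1 : ℂ) * inner ℂ (e' μ1) h2 := by
    intro μ1 μ2 h1 h2
    have l1 := (he μ1 h1).mul (he μ2 h2)
    have l2 := (he μ2 h1).mul (he μ1 h2)
    have hfeq : (fun k => (inner ℂ (e k μ1) h1 : ℂ) * inner ℂ (e k μ2) h2)
        = fun k => (inner ℂ (e k μ2) h1 : ℂ) * inner ℂ (e k μ1) h2 := by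
      funext k
      obtain ⟨a, b, _, _, hk⟩ := hmin k
      rw [hk]
      exact rankOne_det a b μ1 μ2 h1 h2
    rw [hfeq] at l1
    exact tendsto_nhds_unique l1 l2
  obtain ⟨a', b', he'⟩ := exists_rankOne e' hdet
  have heq' : (inner ℂ ((e' ∘L adjoint ξ ∘L e') μ) h : ℂ)
      = (∑ i : Fin r, (inner ℂ (e' (EuclideanSpace.single i 1))
          (ξ (EuclideanSpace.single i 1)) : ℂ)) * inner ℂ (e' μ) h := by
    rw [he']
    exact key a' b' ξ μ h
  rw [heq']
  refine hmain.congr fun k => ?_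
  obtain ⟨a, b, _, _, hk⟩ := hmin k
  rw [hk]
  exact (key a b (z k) μ h).symm
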